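/- arXiv:2303.06127 — 2 statements merged into one kernel-verified Lean document; each statement's English description precedes it below -/
import Mathlib

section
/- Fix L > 0 and α, β ∈ (0, L) with α + β ≤ L, and suppose F_l(α) = false and F_r(β) = false. Consider the multiset consisting of m ≥ 1 copies of I1 = [0, L), one copy of I2 = [α − L, α) and one copy of I3 = [L − β, 2L − β). Then opt of this multiset is 2, and for every ordering of the multiset whose first element is a copy of I1, the memoryless algorithm A_{F_l,F_r} ends with final solution exactly {[0, L)}, of cardinality 1. (This is the deterministic core of the lemma that if F_l(γ) = false for some γ > L/2 while F_r is false on overlaps at most L/2, the adversary forces competitive ratio 2 under random-order arrivals.) -/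
open scoped Classical

/-- An interval: a pair `(s, f)` of reals with `s < f`, identified with `[s, f) ⊆ ℝ`. -/
structure Ivl where
  s : ℝ
  f : ℝ
  lt : s < f

namespace Ivl

noncomputable instance : DecidableEq Ivl := fun a b =>
  decidable_of_iff (a.s = b.s ∧ a.f = b.f) (by cases a; cases b; simp)

/-- The set of points covered by an interval. -/
def toSet (I : Ivl) : Set ℝ := Set.Ico I.s I.f

/-- The length of an interval. -/
def length (I : Ivl) : ℝ := I.f - I.s

/-- Two intervals conflict if their point sets intersect. -/
def Conflict (I J : Ivl) : Prop := (I.toSet ∩ J.toSet).Nonempty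

/-- A finite set of intervals is feasible (pairwise disjoint) if no two distinct members
conflict. -/
def Feasible (S : Finset Ivl) : Prop :=
  ∀ I ∈ S, ∀ J ∈ S, I ≠ J → ¬ Conflict I J

end Ivl

/-- `optM M` is the maximum cardinality of a pairwise-disjoint finite set of intervals all of
which occur in the multiset `M`. -/
noncomputable def optM (M : Multiset Ivl) : ℕ :=
  (M.toFinset.powerset.filter (fun T => Ivl.Feasible T)).sup Finset.card

/-- One step of the deterministic memoryless algorithm `A_{F_l, F_r}` on single-length
instances: on arrival of `I`, let `C` be the set of currently scheduled intervals conflicting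
with `I`.  If `C = ∅`, take `I`.  If `C = {J}` and `I` overlaps `J` on the left
(`I.s < J.s`, overlap `I.f - J.s`), replace `J` by `I` iff `F_l` of the overlap is `true`;
if `I` overlaps `J` on the right (`J.s < I.s`, overlap `J.f - I.s`), replace iff `F_r` of
the overlap is `true`.  In all other cases (identical interval, or two or more conflicts)
leave the solution unchanged. -/
noncomputable def memStep (Fl Fr : ℝ → Bool) (S : Finset Ivl) (I : Ivl) : Finset Ivl :=
  let C := S.filter (fun J => Ivl.Conflict J I)
  if C = ∅ then insert I S
  else if hC : ∃ J : Ivl, C = {J} then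
    let J := hC.choose
    if I.s < J.s then (if Fl (I.f - J.s) then insert I (S.erase J) else S)
    else if J.s < I.s then (if Fr (J.f - I.s) then insert I (S.erase J) else S)
    else S
  else S

/-- The memoryless algorithm `A_{F_l, F_r}` run on a list of arrivals. -/
noncomputable def memRun (Fl Fr : ℝ → Bool) (σ : List Ivl) : Finset Ivl :=
  σ.foldl (memStep Fl Fr) ∅

lemma memStep_empty (Fl Fr : ℝ → Bool) (I : Ivl) : memStep Fl Fr ∅ I = {I} := by
  unfold memStep
  simp

lemma memStep_single_keep (Fl Fr : ℝ → Bool) (J I : Ivl) (h : Ivl.Conflict J I)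
    (h1 : I.s < J.s → Fl (I.f - J.s) = false)
    (h2 : J.s < I.s → Fr (J.f - I.s) = false) :
    memStep Fl Fr {J} I = {J} := by
  have hC : Finset.filter (fun K => Ivl.Conflict K I) ({J} : Finset Ivl) = {J} := by
    rw [Finset.filter_singleton, if_pos h]
  unfold memStep
  simp only [hC]
  rw [if_neg (by simp : ({J} : Finset Ivl) ≠ ∅)]
  have hex : ∃ K : Ivl, ({J} : Finset Ivl) = {K} := ⟨J, rfl⟩
  rw [dif_pos hex]
  have hch : hex.choose = J := (Finset.singleton_inj.mp hex.choose_spec).symm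
  rw [hch]
  rcases lt_trichotomy I.s J.s with hlt | heq | hgt
  · rw [if_pos hlt, if_neg (by simp [h1 hlt])]
  · rw [if_neg (not_lt_of_ge heq.le), if_neg (not_lt_of_ge heq.ge)]
  · rw [if_neg (not_lt_of_ge hgt.le), if_pos hgt, if_neg (by simp [h2 hgt])]
/-- Deterministic core of the random-order lower bound when `F_l α = false` and
`F_r β = false`: for the multiset of `m` copies of `I1 = [0, L)` plus `I2 = [α - L, α)` and
`I3 = [L - β, 2L - β)` (with `α, β ∈ (0, L)`, `α + β ≤ L`), the optimum is `2`, while on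
every arrival order starting with a copy of `I1` the memoryless algorithm `A_{F_l, F_r}`
ends with the single interval `I1`. -/
theorem memoryless_reject_both_bad_instance (Fl Fr : ℝ → Bool) (L α β : ℝ) (hL : 0 < L)
    (hα : α ∈ Set.Ioo 0 L) (hβ : β ∈ Set.Ioo 0 L) (hαβ : α + β ≤ L)
    (hFl : Fl α = false) (hFr : Fr β = false)
    (m : ℕ) (hm : 1 ≤ m)
    (I1 I2 I3 : Ivl) (hI1 : I1.s = 0 ∧ I1.f = L) (hI2 : I2.s = α - L ∧ I2.f = α)
    (hI3 : I3.s = L - β ∧ I3.f = 2 * L - β) :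
    optM (Multiset.replicate m I1 + {I2, I3}) = 2 ∧
      ∀ σ : List Ivl, (σ : Multiset Ivl) = Multiset.replicate m I1 + {I2, I3} →
        σ.head? = some I1 →
        memRun Fl Fr σ = {I1} := by
  obtain ⟨hI1s, hI1f⟩ := hI1
  obtain ⟨hI2s, hI2f⟩ := hI2
  obtain ⟨hI3s, hI3f⟩ := hI3
  obtain ⟨hα0, hαL⟩ := hα
  obtain ⟨hβ0, hβL⟩ := hβ
  -- distinctness
  have h12 : I1 ≠ I2 := by
    intro h; rw [h, hI2s] at hI1s; linarith
  have h13 : I1 ≠ I3 := by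
    intro h; rw [h, hI3s] at hI1s; linarith
  have h23 : I2 ≠ I3 := by
    intro h; rw [h, hI3s] at hI2s; linarith
  -- conflicts
  have c11 : Ivl.Conflict I1 I1 := by
    refine ⟨I1.s, ?_⟩
    simp only [Set.mem_inter_iff, Ivl.toSet, Set.mem_Ico]
    exact ⟨⟨le_refl _, I1.lt⟩, le_refl _, I1.lt⟩
  have c12 : Ivl.Conflict I1 I2 := by
    refine ⟨0, ?_⟩
    simp only [Set.mem_inter_iff, Ivl.toSet, Set.mem_Ico, hI1s, hI1f, hI2s, hI2f]
    exact ⟨⟨le_refl 0, hL⟩, by linarith, hα0⟩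
  have c13 : Ivl.Conflict I1 I3 := by
    refine ⟨L - β, ?_⟩
    simp only [Set.mem_inter_iff, Ivl.toSet, Set.mem_Ico, hI1s, hI1f, hI3s, hI3f]
    exact ⟨⟨by linarith, by linarith⟩, le_refl _, by linarith⟩
  have n23 : ¬ Ivl.Conflict I2 I3 := by
    rintro ⟨x, hx2, hx3⟩
    simp only [Ivl.toSet, Set.mem_Ico, hI2s, hI2f, hI3s, hI3f] at hx2 hx3
    linarith [hx2.2, hx3.1]
  have n32 : ¬ Ivl.Conflict I3 I2 := fun ⟨x, h3, h2⟩ => n23 ⟨x, h2, h3⟩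
  have hm' : m ≠ 0 := by omega
  have hmemM : ∀ x : Ivl, x ∈ (Multiset.replicate m I1 + ({I2, I3} : Multiset Ivl)) ↔
      (x = I1 ∨ x = I2 ∨ x = I3) := by
    intro x
    simp only [Multiset.mem_add, Multiset.mem_replicate, hm', ne_eq, not_false_iff,
      true_and, Multiset.insert_eq_cons, Multiset.mem_cons, Multiset.mem_singleton]
    try tauto
  constructor
  · -- optM = 2
    apply le_antisymm
    · apply Finset.sup_le
      intro T hT
      rw [Finset.mem_filter, Finset.mem_powerset] at hT
      obtain ⟨hTsub, hTfeas⟩ := hT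
      have hT3 : ∀ x ∈ T, x = I1 ∨ x = I2 ∨ x = I3 := by
        intro x hx
        exact (hmemM x).mp (Multiset.mem_toFinset.mp (hTsub hx))
      by_cases h1 : I1 ∈ T
      · have hsub : T ⊆ {I1} := by
          intro x hx
          rcases hT3 x hx with h | h | h
          · rw [h]; exact Finset.mem_singleton_self _
          · rw [h] at hx; exact absurd c12 (hTfeas I1 h1 I2 hx h12)
          · rw [h] at hx; exact absurd c13 (hTfeas I1 h1 I3 hx h13)
        calc T.card ≤ ({I1} : Finset Ivl).card := Finset.card_le_card hsub
          _ ≤ 2 := by simp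
      · have hsub : T ⊆ {I2, I3} := by
          intro x hx
          rcases hT3 x hx with h | h | h
          · rw [h] at hx; exact absurd hx h1
          · rw [h]; simp
          · rw [h]; simp
        calc T.card ≤ ({I2, I3} : Finset Ivl).card := Finset.card_le_card hsub
          _ ≤ 2 := Finset.card_insert_le _ _ |>.trans (by simp)
    · have hmem : ({I2, I3} : Finset Ivl) ∈
          (Multiset.replicate m I1 + ({I2, I3} : Multiset Ivl)).toFinset.powerset.filter
            (fun T => Ivl.Feasible T) := by
        rw [Finset.mem_filter, Finset.mem_powerset]
        constructor
        · intro x hx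
          rw [Multiset.mem_toFinset, hmemM]
          rcases Finset.mem_insert.mp hx with rfl | hx
          · exact Or.inr (Or.inl rfl)
          · exact Or.inr (Or.inr (Finset.mem_singleton.mp hx))
        · intro I hI J hJ hne
          simp only [Finset.mem_insert, Finset.mem_singleton] at hI hJ
          rcases hI with hI | hI <;> rcases hJ with hJ | hJ
          · rw [hI, hJ] at hne; exact absurd rfl hne
          · rw [hI, hJ]; exact n23
          · rw [hI, hJ]; exact n32
          · rw [hI, hJ] at hne; exact absurd rfl hne
      have := Finset.le_sup (f := Finset.card) hmem
      rwa [Finset.card_pair h23] at this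
  · -- algorithm part
    intro σ hσ hhead
    obtain ⟨a, rest, rfl⟩ : ∃ a rest, σ = a :: rest := by
      cases σ with
      | nil => simp at hhead
      | cons a rest => exact ⟨a, rest, rfl⟩
    have ha : a = I1 := by simpa using hhead
    have hrest : ∀ x ∈ rest, x = I1 ∨ x = I2 ∨ x = I3 := by
      intro x hx
      apply (hmemM x).mp
      rw [← hσ]
      simp [hx]
    have hkeep : ∀ x, (x = I1 ∨ x = I2 ∨ x = I3) → memStep Fl Fr {I1} x = {I1} := by
      rintro x (h | h | h) <;> rw [h]
      · exact memStep_single_keep Fl Fr I1 I1 c11 (fun h => absurd h (lt_irrefl _))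
          (fun h => absurd h (lt_irrefl _))
      · refine memStep_single_keep Fl Fr I1 I2 c12 (fun _ => ?_) (fun h => ?_)
        · rw [hI2f, hI1s, sub_zero]; exact hFl
        · rw [hI1s, hI2s] at h; linarith
      · refine memStep_single_keep Fl Fr I1 I3 c13 (fun h => ?_) (fun _ => ?_)
        · rw [hI1s, hI3s] at h; linarith
        · rw [hI1f, hI3s]; rw [show L - (L - β) = β by ring]; exact hFr
    show List.foldl (memStep Fl Fr) ∅ (a :: rest) = {I1}
    rw [List.foldl_cons, memStep_empty, ha]
    clear hσ hhead
    induction rest with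
    | nil => rfl
    | cons b l ih =>
      rw [List.foldl_cons, hkeep b (hrest b List.mem_cons_self)]
      exact ih (fun x hx => hrest x (List.mem_cons_of_mem b hx))
end

section
/- Fix L > 0 and α, β ∈ (0, L) with α + β ≤ L, and suppose F_l(α) = true, F_r(α) = true and F_r(β) = false. Consider the multiset consisting of m ≥ 1 copies of I1 = [0, L), one copy of I2 = [α − L, α) and one copy of I3 = [L − β, 2L − β). Then opt of this multiset is 2, and for every ordering of the multiset such that (a) the first element is a copy of I1, (b) at least one copy of I1 occurs between I2 and I3, and (c) at least one copy of I1 occurs after both I2 and I3, the memoryless algorithm A_{F_l,F_r} ends with final solution exactly {[0, L)}, of cardinality 1. (This is the deterministic core of the lemma that if F_r(γ) = true for some γ > L/2, the adversary forces competitive ratio 2 under random-order arrivals.) -/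
open scoped Classical

lemma conflict_iff (I J : Ivl) : Ivl.Conflict I J ↔ max I.s J.s < min I.f J.f := by
  simp [Ivl.Conflict, Ivl.toSet, Set.Ico_inter_Ico, Set.nonempty_Ico]

lemma conflict_comm (I J : Ivl) : Ivl.Conflict I J ↔ Ivl.Conflict J I := by
  rw [conflict_iff, conflict_iff, max_comm, min_comm]

lemma conflict_self (I : Ivl) : Ivl.Conflict I I := by
  simp [conflict_iff, I.lt]

lemma memStep_singleton (Fl Fr : ℝ → Bool) (K I : Ivl) (h : Ivl.Conflict K I) :
    memStep Fl Fr {K} I =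
      if I.s < K.s then (if Fl (I.f - K.s) then {I} else {K})
      else if K.s < I.s then (if Fr (K.f - I.s) then {I} else {K})
      else {K} := by
  have hC : ({K} : Finset Ivl).filter (fun J => Ivl.Conflict J I) = {K} := by
    rw [Finset.filter_singleton]; simp [h]
  unfold memStep
  simp only [hC]
  have hne : ({K} : Finset Ivl) ≠ ∅ := Finset.singleton_ne_empty K
  rw [if_neg hne]
  have hex : ∃ J : Ivl, ({K} : Finset Ivl) = {J} := ⟨K, rfl⟩
  rw [dif_pos hex]
  have hchoose : hex.choose = K := Finset.singleton_injective hex.choose_spec.symm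
  rw [hchoose]
  simp [Finset.erase_singleton]

lemma memStep_self (Fl Fr : ℝ → Bool) (I : Ivl) : memStep Fl Fr {I} I = {I} := by
  rw [memStep_singleton Fl Fr I I (conflict_self I)]
  simp

lemma foldl_all_same (Fl Fr : ℝ → Bool) (I1 : Ivl) (S : Finset Ivl)
    (hS : memStep Fl Fr S I1 = S) :
    ∀ l : List Ivl, (∀ x ∈ l, x = I1) → l.foldl (memStep Fl Fr) S = S := by
  intro l
  induction l with
  | nil => intro _; rfl
  | cons a t ih =>
    intro hall
    have ha : a = I1 := hall a (List.mem_cons_self)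
    subst ha
    simp only [List.foldl_cons, hS]
    exact ih (fun x hx => hall x (List.mem_cons_of_mem _ hx))

/-- Deterministic core of the random-order lower bound when `F_l α = true`, `F_r α = true`
and `F_r β = false`: for the multiset of `m` copies of `I1 = [0, L)` plus
`I2 = [α - L, α)` and `I3 = [L - β, 2L - β)` (with `α, β ∈ (0, L)`, `α + β ≤ L`), the
optimum is `2`, while on every arrival order that starts with a copy of `I1`, has a copy of
`I1` between `I2` and `I3`, and has a copy of `I1` after both, the memoryless algorithm
`A_{F_l, F_r}` ends with the single interval `I1`. -/
theorem memoryless_replace_right_bad_instance (Fl Fr : ℝ → Bool) (L α β : ℝ) (hL : 0 < L)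
    (hα : α ∈ Set.Ioo 0 L) (hβ : β ∈ Set.Ioo 0 L) (hαβ : α + β ≤ L)
    (hFl : Fl α = true) (hFrα : Fr α = true) (hFrβ : Fr β = false)
    (m : ℕ) (hm : 1 ≤ m)
    (I1 I2 I3 : Ivl) (hI1 : I1.s = 0 ∧ I1.f = L) (hI2 : I2.s = α - L ∧ I2.f = α)
    (hI3 : I3.s = L - β ∧ I3.f = 2 * L - β) :
    optM (Multiset.replicate m I1 + {I2, I3}) = 2 ∧
      ∀ σ : List Ivl, (σ : Multiset Ivl) = Multiset.replicate m I1 + {I2, I3} →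
        σ.head? = some I1 →
        (∃ l₁ l₂ l₃ : List Ivl, I1 ∈ l₂ ∧ I1 ∈ l₃ ∧
          (σ = l₁ ++ I2 :: (l₂ ++ I3 :: l₃) ∨ σ = l₁ ++ I3 :: (l₂ ++ I2 :: l₃))) →
        memRun Fl Fr σ = {I1} := by
  obtain ⟨hs1, hf1⟩ := hI1
  obtain ⟨hs2, hf2⟩ := hI2
  obtain ⟨hs3, hf3⟩ := hI3
  obtain ⟨hα0, hαL⟩ := hα
  obtain ⟨hβ0, hβL⟩ := hβ
  have hm0 : m ≠ 0 := by omega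
  have hne12 : I1 ≠ I2 := by intro h; rw [h, hs2] at hs1; linarith
  have hne13 : I1 ≠ I3 := by intro h; rw [h, hs3] at hs1; linarith
  have hne23 : I2 ≠ I3 := by intro h; rw [h, hs3] at hs2; linarith
  have c12 : Ivl.Conflict I1 I2 := by
    rw [conflict_iff, hs1, hs2, hf1, hf2, max_lt_iff, lt_min_iff, lt_min_iff]
    refine ⟨⟨?_, ?_⟩, ?_, ?_⟩ <;> linarith
  have c13 : Ivl.Conflict I1 I3 := by
    rw [conflict_iff, hs1, hs3, hf1, hf3, max_lt_iff, lt_min_iff, lt_min_iff]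
    refine ⟨⟨?_, ?_⟩, ?_, ?_⟩ <;> linarith
  have nc23 : ¬ Ivl.Conflict I2 I3 := by
    intro h
    rw [conflict_iff, hs2, hs3, hf2, hf3, max_lt_iff, lt_min_iff, lt_min_iff] at h
    linarith [h.2.1]
  constructor
  · -- optM = 2
    have htf : (Multiset.replicate m I1 + ({I2, I3} : Multiset Ivl)).toFinset
        = {I1, I2, I3} := by
      ext x
      simp only [Multiset.mem_toFinset, Multiset.mem_add, Multiset.mem_replicate,
        Multiset.insert_eq_cons, Multiset.mem_cons, Multiset.mem_singleton,
        Finset.mem_insert, Finset.mem_singleton]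
      tauto
    unfold optM
    rw [htf]
    apply le_antisymm
    · apply Finset.sup_le
      intro T hT
      rw [Finset.mem_filter, Finset.mem_powerset] at hT
      obtain ⟨hsub, hfeas⟩ := hT
      by_cases h1 : I1 ∈ T
      · have h2 : I2 ∉ T := fun h2 => hfeas I1 h1 I2 h2 hne12 c12
        have h3 : I3 ∉ T := fun h3 => hfeas I1 h1 I3 h3 hne13 c13
        have hsub1 : T ⊆ {I1} := by
          intro x hx
          have hx3 := hsub hx
          simp only [Finset.mem_insert, Finset.mem_singleton] at hx3 ⊢
          rcases hx3 with rfl | rfl | rfl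
          · rfl
          · exact absurd hx h2
          · exact absurd hx h3
        calc T.card ≤ ({I1} : Finset Ivl).card := Finset.card_le_card hsub1
          _ ≤ 2 := by simp
      · have hsub2 : T ⊆ {I2, I3} := by
          intro x hx
          have hx3 := hsub hx
          simp only [Finset.mem_insert, Finset.mem_singleton] at hx3 ⊢
          rcases hx3 with rfl | rfl | rfl
          · exact absurd hx h1
          · exact Or.inl rfl
          · exact Or.inr rfl
        calc T.card ≤ ({I2, I3} : Finset Ivl).card := Finset.card_le_card hsub2
          _ ≤ 2 := (Finset.card_insert_le _ _).trans (by simp)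
    · have hmem : ({I2, I3} : Finset Ivl) ∈
          (({I1, I2, I3} : Finset Ivl).powerset.filter (fun T => Ivl.Feasible T)) := by
        rw [Finset.mem_filter, Finset.mem_powerset]
        constructor
        · intro x hx
          simp only [Finset.mem_insert, Finset.mem_singleton] at hx ⊢
          tauto
        · intro I hI J hJ hIJ hc
          simp only [Finset.mem_insert, Finset.mem_singleton] at hI hJ
          rcases hI with hI | hI <;> rcases hJ with hJ | hJ <;>
            rw [hI, hJ] at hc hIJ
          · exact hIJ rfl
          · exact nc23 hc
          · exact nc23 ((conflict_comm I3 I2).mp hc)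
          · exact hIJ rfl
      have := Finset.le_sup (f := Finset.card) hmem
      rwa [Finset.card_pair hne23] at this
  · -- the algorithm's behaviour
    intro σ hσ hhead ⟨l₁, l₂, l₃, h2, h3, hcase⟩
    -- step lemmas
    have step12 : memStep Fl Fr {I1} I2 = {I2} := by
      rw [memStep_singleton Fl Fr I1 I2 c12]
      rw [if_pos (by rw [hs1, hs2]; linarith)]
      have h' : I2.f - I1.s = α := by rw [hf2, hs1]; ring
      rw [h', hFl]
      simp
    have step21 : memStep Fl Fr {I2} I1 = {I1} := by
      rw [memStep_singleton Fl Fr I2 I1 ((conflict_comm I1 I2).mp c12)]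
      rw [if_neg (by rw [hs1, hs2]; intro h; linarith), if_pos (by rw [hs1, hs2]; linarith)]
      have h' : I2.f - I1.s = α := by rw [hf2, hs1]; ring
      rw [h', hFrα]
      simp
    have step13 : memStep Fl Fr {I1} I3 = {I1} := by
      rw [memStep_singleton Fl Fr I1 I3 c13]
      rw [if_neg (by rw [hs1, hs3]; intro h; linarith), if_pos (by rw [hs1, hs3]; linarith)]
      have h' : I1.f - I3.s = β := by rw [hf1, hs3]; ring
      rw [h', hFrβ]
      simp
    have step11 := memStep_self Fl Fr I1
    -- every element of σ is I1, I2 or I3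
    have hmem : ∀ x ∈ σ, x = I1 ∨ x = I2 ∨ x = I3 := by
      intro x hx
      have hx' : x ∈ (σ : Multiset Ivl) := by simpa using hx
      rw [hσ, Multiset.mem_add, Multiset.mem_replicate] at hx'
      rcases hx' with h | h
      · exact Or.inl h.2
      · right
        simpa using h
    -- counts of I2 and I3 in σ
    have hcnt2 : List.count I2 σ = 1 := by
      have h' : Multiset.count I2 (σ : Multiset Ivl) = 1 := by
        rw [hσ, Multiset.count_add, Multiset.count_replicate, if_neg hne12]
        simp [Multiset.count_cons, hne23]
      simpa using h'
    have hcnt3 : List.count I3 σ = 1 := by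
      have h' : Multiset.count I3 (σ : Multiset Ivl) = 1 := by
        rw [hσ, Multiset.count_add, Multiset.count_replicate, if_neg hne13]
        simp [Multiset.count_cons, Ne.symm hne23]
      simpa using h'
    rcases hcase with hdec | hdec
    · -- case σ = l₁ ++ I2 :: (l₂ ++ I3 :: l₃)
      have hno2 : I2 ∉ l₁ ∧ I2 ∉ l₂ ∧ I2 ∉ l₃ := by
        have h := hcnt2
        rw [hdec] at h
        simp [List.count_append, List.count_cons, hne23, Ne.symm hne23] at h
        refine ⟨List.count_eq_zero.mp ?_, List.count_eq_zero.mp ?_,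
          List.count_eq_zero.mp ?_⟩ <;> omega
      have hno3 : I3 ∉ l₁ ∧ I3 ∉ l₂ ∧ I3 ∉ l₃ := by
        have h := hcnt3
        rw [hdec] at h
        simp [List.count_append, List.count_cons, hne23, Ne.symm hne23] at h
        refine ⟨List.count_eq_zero.mp ?_, List.count_eq_zero.mp ?_,
          List.count_eq_zero.mp ?_⟩ <;> omega
      have hl1 : ∀ x ∈ l₁, x = I1 := by
        intro x hx
        rcases hmem x (by rw [hdec]; simp [hx]) with rfl | rfl | rfl
        · rfl
        · exact absurd hx hno2.1
        · exact absurd hx hno3.1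
      have hl2 : ∀ x ∈ l₂, x = I1 := by
        intro x hx
        rcases hmem x (by rw [hdec]; simp [hx]) with rfl | rfl | rfl
        · rfl
        · exact absurd hx hno2.2.1
        · exact absurd hx hno3.2.1
      have hl3 : ∀ x ∈ l₃, x = I1 := by
        intro x hx
        rcases hmem x (by rw [hdec]; simp [hx]) with rfl | rfl | rfl
        · rfl
        · exact absurd hx hno2.2.2
        · exact absurd hx hno3.2.2
      rcases l₁ with _ | ⟨c, t⟩
      · rw [hdec] at hhead
        simp only [List.nil_append, List.head?_cons, Option.some.injEq] at hhead
        exact absurd hhead.symm hne12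
      · have hc : c = I1 := hl1 c (List.mem_cons_self)
        rcases l₂ with _ | ⟨d, u⟩
        · exact absurd h2 List.not_mem_nil
        · have hd : d = I1 := hl2 d (List.mem_cons_self)
          have et : t.foldl (memStep Fl Fr) {I1} = {I1} :=
            foldl_all_same Fl Fr I1 {I1} step11 t
              (fun x hx => hl1 x (List.mem_cons_of_mem _ hx))
          have eu : u.foldl (memStep Fl Fr) {I1} = {I1} :=
            foldl_all_same Fl Fr I1 {I1} step11 u
              (fun x hx => hl2 x (List.mem_cons_of_mem _ hx))
          have e3 : l₃.foldl (memStep Fl Fr) {I1} = {I1} :=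
            foldl_all_same Fl Fr I1 {I1} step11 l₃ hl3
          unfold memRun
          rw [hdec, hc, hd]
          simp only [List.cons_append, List.foldl_cons, List.foldl_append,
            memStep_empty, et, step12, step21, eu, step13, e3]
    · -- case σ = l₁ ++ I3 :: (l₂ ++ I2 :: l₃)
      have hno2 : I2 ∉ l₁ ∧ I2 ∉ l₂ ∧ I2 ∉ l₃ := by
        have h := hcnt2
        rw [hdec] at h
        simp [List.count_append, List.count_cons, hne23, Ne.symm hne23] at h
        refine ⟨List.count_eq_zero.mp ?_, List.count_eq_zero.mp ?_,
          List.count_eq_zero.mp ?_⟩ <;> omega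
      have hno3 : I3 ∉ l₁ ∧ I3 ∉ l₂ ∧ I3 ∉ l₃ := by
        have h := hcnt3
        rw [hdec] at h
        simp [List.count_append, List.count_cons, hne23, Ne.symm hne23] at h
        refine ⟨List.count_eq_zero.mp ?_, List.count_eq_zero.mp ?_,
          List.count_eq_zero.mp ?_⟩ <;> omega
      have hl1 : ∀ x ∈ l₁, x = I1 := by
        intro x hx
        rcases hmem x (by rw [hdec]; simp [hx]) with rfl | rfl | rfl
        · rfl
        · exact absurd hx hno2.1
        · exact absurd hx hno3.1
      have hl2 : ∀ x ∈ l₂, x = I1 := by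
        intro x hx
        rcases hmem x (by rw [hdec]; simp [hx]) with rfl | rfl | rfl
        · rfl
        · exact absurd hx hno2.2.1
        · exact absurd hx hno3.2.1
      have hl3 : ∀ x ∈ l₃, x = I1 := by
        intro x hx
        rcases hmem x (by rw [hdec]; simp [hx]) with rfl | rfl | rfl
        · rfl
        · exact absurd hx hno2.2.2
        · exact absurd hx hno3.2.2
      rcases l₁ with _ | ⟨c, t⟩
      · rw [hdec] at hhead
        simp only [List.nil_append, List.head?_cons, Option.some.injEq] at hhead
        exact absurd hhead.symm hne13
      · have hc : c = I1 := hl1 c (List.mem_cons_self)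
        rcases l₃ with _ | ⟨d, u⟩
        · exact absurd h3 List.not_mem_nil
        · have hd : d = I1 := hl3 d (List.mem_cons_self)
          have et : t.foldl (memStep Fl Fr) {I1} = {I1} :=
            foldl_all_same Fl Fr I1 {I1} step11 t
              (fun x hx => hl1 x (List.mem_cons_of_mem _ hx))
          have e2 : l₂.foldl (memStep Fl Fr) {I1} = {I1} :=
            foldl_all_same Fl Fr I1 {I1} step11 l₂ hl2
          have eu : u.foldl (memStep Fl Fr) {I1} = {I1} :=
            foldl_all_same Fl Fr I1 {I1} step11 u
              (fun x hx => hl3 x (List.mem_cons_of_mem _ hx))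
          unfold memRun
          rw [hdec, hc, hd]
          simp only [List.cons_append, List.foldl_cons, List.foldl_append,
            memStep_empty, et, step13, e2, step12, step21, eu]
end
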